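/- If a bounded selfadjoint operator T on H⊗H is crossing symmetric with respect to a standard subspace H and compatible with H (i.e. commutes with Δ_H^{it} ⊗ Δ_H^{it}), then F T F = (J_H ⊗ J_H) T (J_H ⊗ J_H), where F is the tensor flip. -/

import Mathlib

/-!
STATEMENT 12: If a bounded selfadjoint operator `T` on `H ⊗ H` is crossing
symmetric with respect to a standard subspace `H` and compatible with `H`
(i.e. commutes with `Δ_H^{it} ⊗ Δ_H^{it}`), then
`F T F = (J_H ⊗ J_H) T (J_H ⊗ J_H)`, where `F` is the tensor flip.

The modular data `(Δ^{it}, J)` of the standard subspace are axiomatized in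
`ModularData`; the Hilbert tensor square `𝓗 ⊗ 𝓗` is axiomatized as a Hilbert
space `K` together with the bilinear tensor map `τ` (with the tensor-product
inner ℂ product and total range), the flip `Fop`, the amplifications
`UL t = Δ^{it} ⊗ 1`, `UR t = 1 ⊗ Δ^{it}`, and the antiunitary `JJ = J ⊗ J`.
Crossing symmetry is the analytic-continuation condition of Def. 3.3 of the
paper.
-/

noncomputable section

private lemma aux_ext_zero {K F : Type*} [NormedAddCommGroup K] [InnerProductSpace ℂ K]
    [AddCommGroup F] [TopologicalSpace F] [T2Space F]
    {s : Set K} (hsmul : ∀ (c : ℂ) (v : K), v ∈ s → c • v ∈ s)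
    (hs : Dense ((Submodule.span ℂ s : Submodule ℂ K) : Set K))
    {φ : K → F} (hc : Continuous φ) (hadd : ∀ u v, φ (u + v) = φ u + φ v)
    (h0 : ∀ v ∈ s, φ v = 0) : ∀ w, φ w = 0 := by
  have hspan : ∀ x ∈ (Submodule.span ℂ s : Submodule ℂ K), φ x = 0 := by
    intro x hx
    obtain ⟨c, hcs, rfl⟩ := Submodule.mem_span_set.mp hx
    rw [Finsupp.sum]
    have hmap : φ (∑ a ∈ c.support, c a • a) = ∑ a ∈ c.support, φ (c a • a) :=
      map_sum (AddMonoidHom.mk' φ hadd) _ _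
    rw [hmap]
    exact Finset.sum_eq_zero fun v hv => h0 _ (hsmul _ _ (hcs hv))
  have heq : φ = fun _ => 0 :=
    Continuous.ext_on hs hc continuous_const fun x hx => hspan x hx
  exact fun w => congrFun heq w

private lemma aux_conj_diff {h : ℂ → ℂ} {z c : ℂ}
    (hd : DifferentiableAt ℂ h ((starRingEnd ℂ) z + c)) :
    DifferentiableAt ℂ (fun w => (starRingEnd ℂ) (h ((starRingEnd ℂ) w + c))) z := by
  obtain ⟨h', hh'⟩ := hd
  have hm : HasFDerivAt (fun w : ℂ => (starRingEnd ℂ) w + c)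
      (Complex.conjCLE.toContinuousLinearMap : ℂ →L[ℝ] ℂ) z := by
    simpa using (Complex.conjCLE.toContinuousLinearMap.hasFDerivAt (x := z)).add_const c
  have h1 : HasFDerivAt (fun w => h ((starRingEnd ℂ) w + c))
      ((h'.restrictScalars ℝ).comp Complex.conjCLE.toContinuousLinearMap) z :=
    (hh'.restrictScalars ℝ).comp z hm
  have h2 : HasFDerivAt (fun w => (starRingEnd ℂ) (h ((starRingEnd ℂ) w + c)))
      (Complex.conjCLE.toContinuousLinearMap.comp
        ((h'.restrictScalars ℝ).comp Complex.conjCLE.toContinuousLinearMap)) z :=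
    (Complex.conjCLE.toContinuousLinearMap.hasFDerivAt).comp z h1
  refine ⟨((starRingEnd ℂ) (h' 1)) • (1 : ℂ →L[ℂ] ℂ), hasFDerivAt_of_restrictScalars ℝ h2 ?_⟩
  ext v
  have hv : h' ((starRingEnd ℂ) v) = (starRingEnd ℂ) v * h' 1 := by
    have := h'.map_smul ((starRingEnd ℂ) v) (1 : ℂ)
    simpa [smul_eq_mul] using this
  simp [hv, mul_comm]

/-- Axiomatization of the modular data of a standard subspace (the parts
relevant here: the modular group and the modular conjugation). -/
structure ModularData (𝓗 : Type*) [NormedAddCommGroup 𝓗] [InnerProductSpace ℂ 𝓗]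
    [CompleteSpace 𝓗] where
  U : ℝ → (𝓗 ≃ₗᵢ[ℂ] 𝓗)
  U_zero : U 0 = LinearIsometryEquiv.refl ℂ 𝓗
  U_add : ∀ s t, U (s + t) = (U t).trans (U s)
  U_cont : Continuous fun p : ℝ × 𝓗 => U p.1 p.2
  J : 𝓗 → 𝓗
  J_add : ∀ x y, J (x + y) = J x + J y
  J_smul : ∀ (c : ℂ) (x : 𝓗), J (c • x) = (starRingEnd ℂ) c • J x
  J_invol : ∀ x, J (J x) = x
  J_inner : ∀ x y, (inner ℂ (J x) (J y) : ℂ) = inner ℂ y x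
  J_U : ∀ t x, J (U t x) = U t (J x)

open Complex in
/-- A crossing-symmetric compatible selfadjoint twist
satisfies `F T F = (J_H ⊗ J_H) T (J_H ⊗ J_H)`. -/
theorem crossing_symmetric_flip_conjugation
    {𝓗 K : Type*} [NormedAddCommGroup 𝓗] [InnerProductSpace ℂ 𝓗] [CompleteSpace 𝓗]
    [NormedAddCommGroup K] [InnerProductSpace ℂ K] [CompleteSpace K]
    (M : ModularData 𝓗)
    -- the Hilbert tensor square:
    (τ : 𝓗 →ₗ[ℂ] 𝓗 →ₗ[ℂ] K)
    (hτ_inner : ∀ x y x' y',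
      (inner ℂ (τ x y) (τ x' y') : ℂ) = inner ℂ x x' * inner ℂ y y')
    (hτ_total : Dense ((Submodule.span ℂ {v : K | ∃ x y, v = τ x y} : Submodule ℂ K) : Set K))
    -- the twist:
    (T : K →L[ℂ] K) (hT_sa : IsSelfAdjoint T)
    -- amplified modular unitaries `Δ^{it} ⊗ 1` and `1 ⊗ Δ^{it}`:
    (UL UR : ℝ → (K ≃ₗᵢ[ℂ] K))
    (hUL : ∀ t x y, UL t (τ x y) = τ (M.U t x) y)
    (hUR : ∀ t x y, UR t (τ x y) = τ x (M.U t y))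
    -- the tensor flip `F` and the antiunitary `J ⊗ J`:
    (Fop : K →L[ℂ] K) (hF : ∀ x y, Fop (τ x y) = τ y x)
    (JJ : K → K) (hJJ_cont : Continuous JJ)
    (hJJ_add : ∀ u v, JJ (u + v) = JJ u + JJ v)
    (hJJ_smul : ∀ (c : ℂ) (v : K), JJ (c • v) = (starRingEnd ℂ) c • JJ v)
    (hJJ_tensor : ∀ x y, JJ (τ x y) = τ (M.J x) (M.J y))
    -- compatibility `[Δ^{it} ⊗ Δ^{it}, T] = 0`:
    (hcompat : ∀ t (v : K), T (UL t (UR t v)) = UL t (UR t (T v)))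
    -- crossing symmetry w.r.t. `H` (Def. 3.3):
    (hcrossing : ∀ ψ₁ ψ₂ ψ₃ ψ₄ : 𝓗, ∃ f : ℂ → ℂ,
      (∃ C : ℝ, ∀ z ∈ {z : ℂ | 0 ≤ z.im ∧ z.im ≤ 1 / 2}, ‖f z‖ ≤ C) ∧
      ContinuousOn f {z : ℂ | 0 ≤ z.im ∧ z.im ≤ 1 / 2} ∧
      DifferentiableOn ℂ f {z : ℂ | 0 < z.im ∧ z.im < 1 / 2} ∧
      (∀ t : ℝ, f t = (inner ℂ (τ ψ₂ ψ₁) (UL t (T (UR (-t) (τ ψ₃ ψ₄)))) : ℂ)) ∧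
      (∀ t : ℝ, f (t + Complex.I / 2)
        = (inner ℂ (τ ψ₁ (M.J ψ₄)) (UR t (T (UL (-t) (τ (M.J ψ₂) ψ₃)))) : ℂ))) :
    ∀ v : K, Fop (T (Fop v)) = JJ (T (JJ v)) := by
  classical
  set gen : Set K := {v : K | ∃ x y, v = τ x y} with hgen_def
  have hgen_smul : ∀ (c : ℂ) (v : K), v ∈ gen → c • v ∈ gen := by
    rintro c v ⟨x, y, rfl⟩
    exact ⟨c • x, y, by rw [map_smul, LinearMap.smul_apply]⟩
  -- extension principles
  have ext2 : ∀ (f g : K → K), Continuous f → Continuous g →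
      (∀ u v, f (u + v) = f u + f v) → (∀ u v, g (u + v) = g u + g v) →
      (∀ x y, f (τ x y) = g (τ x y)) → ∀ w, f w = g w := by
    intro f g hfc hgc hfa hga h w
    have h0 : ∀ v ∈ gen, f v - g v = 0 := by
      rintro v ⟨x, y, rfl⟩; rw [sub_eq_zero]; exact h x y
    have := aux_ext_zero hgen_smul hτ_total (φ := fun w => f w - g w) (hfc.sub hgc)
      (fun u v => by
        show f (u + v) - g (u + v) = (f u - g u) + (f v - g v)
        rw [hfa, hga]; abel) h0 w
    exact sub_eq_zero.mp this
  have ext2c : ∀ (f g : K → ℂ), Continuous f → Continuous g →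
      (∀ u v, f (u + v) = f u + f v) → (∀ u v, g (u + v) = g u + g v) →
      (∀ x y, f (τ x y) = g (τ x y)) → ∀ w, f w = g w := by
    intro f g hfc hgc hfa hga h w
    have h0 : ∀ v ∈ gen, f v - g v = 0 := by
      rintro v ⟨x, y, rfl⟩; rw [sub_eq_zero]; exact h x y
    have := aux_ext_zero hgen_smul hτ_total (φ := fun w => f w - g w) (hfc.sub hgc)
      (fun u v => by
        show f (u + v) - g (u + v) = (f u - g u) + (f v - g v)
        rw [hfa, hga]; abel) h0 w
    exact sub_eq_zero.mp this
  -- modular group facts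
  have hUinv : ∀ (t : ℝ) (x : 𝓗), M.U t (M.U (-t) x) = x := by
    intro t x
    have h1 : M.U (t + -t) x = M.U t (M.U (-t) x) := by
      rw [M.U_add]; rfl
    rw [← h1, add_neg_cancel, M.U_zero]; rfl
  have hUinv' : ∀ (t : ℝ) (x : 𝓗), M.U (-t) (M.U t x) = x := by
    intro t x
    have h1 : M.U (-t + t) x = M.U (-t) (M.U t x) := by
      rw [M.U_add]; rfl
    rw [← h1, neg_add_cancel, M.U_zero]; rfl
  have hUL0 : ∀ w, UL 0 w = w :=
    ext2 (fun w => UL 0 w) id ((UL 0).continuous) continuous_id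
      (fun u v => map_add _ u v) (fun _ _ => rfl)
      (by intro x y; simp [hUL, M.U_zero])
  have hUR0 : ∀ w, UR 0 w = w :=
    ext2 (fun w => UR 0 w) id ((UR 0).continuous) continuous_id
      (fun u v => map_add _ u v) (fun _ _ => rfl)
      (by intro x y; simp [hUR, M.U_zero])
  have hULinv : ∀ (t : ℝ) (w : K), UL t (UL (-t) w) = w := by
    intro t
    exact ext2 (fun w => UL t (UL (-t) w)) id
      ((UL t).continuous.comp (UL (-t)).continuous) continuous_id
      (fun u v => by simp [map_add]) (fun _ _ => rfl)
      (by intro x y; simp [hUL, hUinv])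
  have hULinv' : ∀ (t : ℝ) (w : K), UL (-t) (UL t w) = w := by
    intro t
    exact ext2 (fun w => UL (-t) (UL t w)) id
      ((UL (-t)).continuous.comp (UL t).continuous) continuous_id
      (fun u v => by simp [map_add]) (fun _ _ => rfl)
      (by intro x y; simp [hUL, hUinv'])
  have hURinv' : ∀ (t : ℝ) (w : K), UR (-t) (UR t w) = w := by
    intro t
    exact ext2 (fun w => UR (-t) (UR t w)) id
      ((UR (-t)).continuous.comp (UR t).continuous) continuous_id
      (fun u v => by simp [map_add]) (fun _ _ => rfl)
      (by intro x y; simp [hUR, hUinv'])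
  have hcomm : ∀ (s t : ℝ) (w : K), UL s (UR t w) = UR t (UL s w) := by
    intro s t
    exact ext2 (fun w => UL s (UR t w)) (fun w => UR t (UL s w))
      ((UL s).continuous.comp (UR t).continuous)
      ((UR t).continuous.comp (UL s).continuous)
      (fun u v => by simp [map_add]) (fun u v => by simp [map_add])
      (by intro x y; simp [hUL, hUR])
  have hmain : ∀ (t : ℝ) (w : K), UL t (T (UR (-t) w)) = UR (-t) (T (UL t w)) := by
    intro t
    refine ext2 _ _ ?_ ?_ ?_ ?_ ?_
    · exact (UL t).continuous.comp (T.continuous.comp (UR (-t)).continuous)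
    · exact (UR (-t)).continuous.comp (T.continuous.comp (UL t).continuous)
    · intro u v; simp [map_add]
    · intro u v; simp [map_add]
    · intro x y
      have h2 := hcompat t (UR (-t) (τ x y))
      rw [hUR, hUR, hUinv] at h2
      have h3 : UR t (T (τ x (M.U (-t) y))) = UL (-t) (T (UL t (τ x y))) := by
        rw [h2, hULinv']
      have h4 : T (τ x (M.U (-t) y)) = UR (-t) (UL (-t) (T (UL t (τ x y)))) := by
        rw [← h3, hURinv']
      show UL t (T (UR (-t) (τ x y))) = UR (-t) (T (UL t (τ x y)))
      rw [hUR, h4, hcomm, hULinv]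
  -- selfadjointness
  have hTadj : ∀ x y : K, (inner ℂ (T x) y : ℂ) = inner ℂ x (T y) := by
    intro x y
    conv_lhs => rw [← hT_sa.adjoint_eq]
    exact ContinuousLinearMap.adjoint_inner_left T y x
  -- the flip is symmetric
  have hflip : ∀ u w : K, (inner ℂ (Fop u) w : ℂ) = inner ℂ u (Fop w) := by
    have step1 : ∀ (x y : 𝓗) (w : K), (inner ℂ (Fop (τ x y)) w : ℂ) = inner ℂ (τ x y) (Fop w) := by
      intro x y
      refine ext2c (fun w => inner ℂ (Fop (τ x y)) w) (fun w => inner ℂ (τ x y) (Fop w)) ?_ ?_ ?_ ?_ ?_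
      · exact continuous_const.inner continuous_id
      · exact continuous_const.inner Fop.continuous
      · intro u v; simp [inner_add_right]
      · intro u v; simp [map_add, inner_add_right]
      · intro x' y'
        show (inner ℂ (Fop (τ x y)) (τ x' y') : ℂ) = inner ℂ (τ x y) (Fop (τ x' y'))
        rw [hF, hF, hτ_inner, hτ_inner]; ring
    intro u w
    refine ext2c (fun u => inner ℂ (Fop u) w) (fun u => inner ℂ u (Fop w)) ?_ ?_ ?_ ?_ ?_ u
    · exact Fop.continuous.inner continuous_const
    · exact continuous_id.inner continuous_const
    · intro a b; simp [map_add, inner_add_left]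
    · intro a b; simp [inner_add_left]
    · intro x y; exact step1 x y w
  -- JJ is "antisymmetric"
  have hJinner : ∀ x x' : 𝓗, (inner ℂ x (M.J x') : ℂ) = inner ℂ x' (M.J x) := by
    intro x x'
    calc (inner ℂ x (M.J x') : ℂ) = inner ℂ (M.J (M.J x)) (M.J x') := by rw [M.J_invol]
      _ = inner ℂ x' (M.J x) := M.J_inner (M.J x) x'
  have hJJsym : ∀ u w : K, (inner ℂ u (JJ w) : ℂ) = inner ℂ w (JJ u) := by
    have step1 : ∀ (x y : 𝓗) (w : K), (inner ℂ (τ x y) (JJ w) : ℂ) = inner ℂ w (JJ (τ x y)) := by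
      intro x y
      refine ext2c (fun w => inner ℂ (τ x y) (JJ w)) (fun w => inner ℂ w (JJ (τ x y))) ?_ ?_ ?_ ?_ ?_
      · exact continuous_const.inner hJJ_cont
      · exact continuous_id.inner continuous_const
      · intro u v; simp [hJJ_add, inner_add_right]
      · intro u v; simp [inner_add_left]
      · intro x' y'
        show (inner ℂ (τ x y) (JJ (τ x' y')) : ℂ) = inner ℂ (τ x' y') (JJ (τ x y))
        rw [hJJ_tensor, hJJ_tensor, hτ_inner, hτ_inner, hJinner x x', hJinner y y']
    intro u w
    refine ext2c (fun u => inner ℂ u (JJ w)) (fun u => inner ℂ w (JJ u)) ?_ ?_ ?_ ?_ ?_ u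
    · exact continuous_id.inner continuous_const
    · exact continuous_const.inner hJJ_cont
    · intro a b; simp [inner_add_left]
    · intro a b; simp [hJJ_add, inner_add_right]
    · intro x y; exact step1 x y w
  -- the analytic core
  have core : ∀ a b c d : 𝓗,
      (inner ℂ (τ b a) (T (τ d c)) : ℂ)
        = inner ℂ (τ (M.J c) (M.J d)) (T (τ (M.J a) (M.J b))) := by
    intro a b c d
    obtain ⟨f, ⟨Cf, hCf⟩, hfc, hfd, hf4, hf5⟩ := hcrossing b (M.J d) c (M.J a)
    obtain ⟨g, ⟨Cg, hCg⟩, hgc, hgd, hg4, hg5⟩ := hcrossing (M.J d) (M.J c) (M.J a) (M.J b)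
    -- boundary relation on the real line
    have hbdry : ∀ t : ℝ, f t = g (-(t : ℂ) + Complex.I / 2) := by
      intro t
      have h1 := hf4 t
      have h2 := hg5 (-t)
      rw [M.J_invol, M.J_invol, neg_neg] at h2
      push_cast at h2
      rw [h2, h1, hmain t (τ c (M.J a))]
    -- endpoint values
    have hf_top : f (Complex.I / 2) = inner ℂ (τ b a) (T (τ d c)) := by
      have h := hf5 0
      rw [neg_zero, M.J_invol, M.J_invol, hUL0, hUR0] at h
      simpa using h
    have hg_bot : g 0 = inner ℂ (τ (M.J c) (M.J d)) (T (τ (M.J a) (M.J b))) := by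
      have h := hg4 0
      rw [neg_zero, hUR0, hUL0] at h
      simpa using h
    -- analytic continuation argument
    set Sop : Set ℂ := Complex.im ⁻¹' Set.Ioo (0 : ℝ) (1 / 2) with hSop_def
    have hSop_eq : Sop = {z : ℂ | 0 < z.im ∧ z.im < 1 / 2} := rfl
    have hS_eq : Complex.im ⁻¹' Set.Icc (0 : ℝ) (1 / 2) = {z : ℂ | 0 ≤ z.im ∧ z.im ≤ 1 / 2} := rfl
    have hSop_open : IsOpen Sop := isOpen_Ioo.preimage Complex.continuous_im
    have hclos : closure Sop = {z : ℂ | 0 ≤ z.im ∧ z.im ≤ 1 / 2} := by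
      rw [hSop_def, Complex.closure_preimage_im, closure_Ioo (by norm_num : (0:ℝ) ≠ 1/2)]
      exact hS_eq
    have hI2im : (Complex.I / 2).im = 1 / 2 := by simp
    have hI4im : (Complex.I / 4).im = 1 / 4 := by simp
    -- the two auxiliary maps preserve the strips
    have hμ_maps : Set.MapsTo (fun z : ℂ => -z + Complex.I / 2)
        {z : ℂ | 0 ≤ z.im ∧ z.im ≤ 1 / 2} {z : ℂ | 0 ≤ z.im ∧ z.im ≤ 1 / 2} := by
      intro z hz
      obtain ⟨h1, h2⟩ := hz
      constructor <;> simp [hI2im] <;> linarith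
    have hμ_maps' : Set.MapsTo (fun z : ℂ => -z + Complex.I / 2) Sop Sop := by
      intro z hz
      rw [hSop_eq] at *
      obtain ⟨h1, h2⟩ := hz
      constructor <;> simp [hI2im] <;> linarith
    have hν_maps : Set.MapsTo (fun z : ℂ => (starRingEnd ℂ) z + Complex.I / 2)
        {z : ℂ | 0 ≤ z.im ∧ z.im ≤ 1 / 2} {z : ℂ | 0 ≤ z.im ∧ z.im ≤ 1 / 2} := by
      intro z hz
      obtain ⟨h1, h2⟩ := hz
      constructor <;> simp [hI2im] <;> linarith
    have hν_maps' : Set.MapsTo (fun z : ℂ => (starRingEnd ℂ) z + Complex.I / 2) Sop Sop := by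
      intro z hz
      rw [hSop_eq] at *
      obtain ⟨h1, h2⟩ := hz
      constructor <;> simp [hI2im] <;> linarith
    set dd : ℂ → ℂ := fun z => f z - g (-z + Complex.I / 2) with hdd_def
    have hμ_cont : Continuous fun z : ℂ => -z + Complex.I / 2 :=
      continuous_neg.add continuous_const
    have hν_cont : Continuous fun z : ℂ => (starRingEnd ℂ) z + Complex.I / 2 :=
      (Complex.continuous_conj.add continuous_const)
    have hd_cont : ContinuousOn dd {z : ℂ | 0 ≤ z.im ∧ z.im ≤ 1 / 2} :=
      hfc.sub (hgc.comp hμ_cont.continuousOn hμ_maps)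
    have hd_diff : DifferentiableOn ℂ dd {z : ℂ | 0 < z.im ∧ z.im < 1 / 2} := by
      refine hfd.sub (hgd.comp ?_ ?_)
      · exact (differentiable_neg.add_const _).differentiableOn
      · rw [← hSop_eq]; exact hμ_maps'
    have hd_diff' : DifferentiableOn ℂ dd Sop := by rw [hSop_eq]; exact hd_diff
    have hdd_real : ∀ t : ℝ, dd (t : ℂ) = 0 := by
      intro t
      show f t - g (-(t:ℂ) + Complex.I / 2) = 0
      rw [hbdry t, sub_self]
    -- bound for dd
    have h0S : (0 : ℂ) ∈ {z : ℂ | 0 ≤ z.im ∧ z.im ≤ 1 / 2} := by norm_num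
    have hCf0 : 0 ≤ Cf := le_trans (norm_nonneg _) (hCf 0 h0S)
    have hCg0 : 0 ≤ Cg := le_trans (norm_nonneg _) (hCg 0 h0S)
    have hdd_bound : ∀ z ∈ {z : ℂ | 0 ≤ z.im ∧ z.im ≤ 1 / 2},
        ‖dd z‖ ≤ Cf + Cg := by
      intro z hz
      have h1 := hCf z hz
      have h2 := hCg _ (hμ_maps hz)
      have h3 : ‖dd z‖ ≤ ‖f z‖ + ‖g (-z + Complex.I / 2)‖ := by
        show ‖f z - g (-z + Complex.I / 2)‖ ≤ _
        exact norm_sub_le (f z) (g (-z + Complex.I / 2))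
      exact h3.trans (add_le_add h1 h2)
    -- the product function
    set ee : ℂ → ℂ := fun z => dd z * (starRingEnd ℂ) (dd ((starRingEnd ℂ) z + Complex.I / 2))
      with hee_def
    have hd'_cont : ContinuousOn
        (fun z => (starRingEnd ℂ) (dd ((starRingEnd ℂ) z + Complex.I / 2)))
        {z : ℂ | 0 ≤ z.im ∧ z.im ≤ 1 / 2} :=
      Complex.continuous_conj.comp_continuousOn (hd_cont.comp hν_cont.continuousOn hν_maps)
    have hd'_diff : DifferentiableOn ℂ
        (fun z => (starRingEnd ℂ) (dd ((starRingEnd ℂ) z + Complex.I / 2))) Sop := by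
      intro z hz
      have hz' : (starRingEnd ℂ) z + Complex.I / 2 ∈ Sop := hν_maps' hz
      have hda : DifferentiableAt ℂ dd ((starRingEnd ℂ) z + Complex.I / 2) :=
        hd_diff'.differentiableAt (hSop_open.mem_nhds hz')
      exact (aux_conj_diff hda).differentiableWithinAt
    have hDCC : DiffContOnCl ℂ ee Sop := by
      constructor
      · exact hd_diff'.mul hd'_diff
      · rw [hclos]
        exact hd_cont.mul hd'_cont
    -- Phragmén–Lindelöf
    have hPL : Set.EqOn ee 0 (Complex.im ⁻¹' Set.Icc (0 : ℝ) (1 / 2)) := by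
      refine PhragmenLindelof.eq_zero_on_horizontal_strip hDCC ?_ ?_ ?_
      · refine ⟨0, by rw [sub_zero]; positivity, (Cf + Cg) ^ 2, ?_⟩
        refine Asymptotics.IsBigO.of_bound 1 ?_
        refine Filter.eventually_inf_principal.2 (Filter.Eventually.of_forall fun z hz => ?_)
        have hzS : z ∈ {z : ℂ | 0 ≤ z.im ∧ z.im ≤ 1 / 2} := by
          rw [← hclos]; exact subset_closure hz
        have h1 := hdd_bound z hzS
        have h2 := hdd_bound _ (hν_maps hzS)
        have hmul : ‖ee z‖ ≤ (Cf + Cg) ^ 2 := by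
          rw [hee_def]
          simp only [norm_mul, Complex.norm_conj]
          calc ‖dd z‖ * ‖dd ((starRingEnd ℂ) z + Complex.I / 2)‖
              ≤ (Cf + Cg) * (Cf + Cg) :=
                mul_le_mul h1 h2 (norm_nonneg _) (by linarith)
            _ = (Cf + Cg) ^ 2 := by ring
        have hexp : (Cf + Cg) ^ 2 ≤ Real.exp ((Cf + Cg) ^ 2) := by
          have := Real.add_one_le_exp ((Cf + Cg) ^ 2)
          linarith
        simp only [Real.norm_eq_abs, zero_mul, Real.exp_zero, mul_one,
          one_mul, abs_of_pos (Real.exp_pos _)]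
        exact hmul.trans hexp
      · intro z hz
        have hzre : (z.re : ℂ) = z := Complex.ext (by simp) (by simp [hz])
        have h1 : dd z = 0 := by rw [← hzre]; exact hdd_real z.re
        show ee z = 0
        rw [hee_def]
        simp only []
        rw [h1, zero_mul]
      · intro z hz
        have hzre : ((starRingEnd ℂ) z + Complex.I / 2) = (z.re : ℂ) :=
          Complex.ext (by simp) (by simp [hz, hI2im])
        show ee z = 0
        rw [hee_def]
        simp only []
        rw [hzre, hdd_real z.re, map_zero, mul_zero]
    -- vanishing on the middle line
    have hmid : ∀ t : ℝ, dd ((t : ℂ) + Complex.I / 4) = 0 := by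
      intro t
      have hself : ((starRingEnd ℂ) ((t : ℂ) + Complex.I / 4) + Complex.I / 2)
          = (t : ℂ) + Complex.I / 4 := by
        rw [map_add, Complex.conj_ofReal]
        rw [show (starRingEnd ℂ) (Complex.I / 4) = -(Complex.I / 4) by
          rw [map_div₀, Complex.conj_I, map_ofNat, neg_div]]
        ring
      have hmem : ((t : ℂ) + Complex.I / 4) ∈ Complex.im ⁻¹' Set.Icc (0 : ℝ) (1 / 2) := by
        simp only [Set.mem_preimage, Set.mem_Icc, Complex.add_im, Complex.ofReal_im, hI4im]
        norm_num
      have he := hPL hmem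
      have h2 : dd ((t : ℂ) + Complex.I / 4)
          * (starRingEnd ℂ) (dd ((t : ℂ) + Complex.I / 4)) = 0 := by
        have h' : dd ((t : ℂ) + Complex.I / 4) * (starRingEnd ℂ)
            (dd ((starRingEnd ℂ) ((t : ℂ) + Complex.I / 4) + Complex.I / 2)) = 0 := he
        rw [hself] at h'
        exact h'
      rw [Complex.mul_conj] at h2
      have h3 : Complex.normSq (dd ((t : ℂ) + Complex.I / 4)) = 0 := by exact_mod_cast h2
      exact Complex.normSq_eq_zero.mp h3
    -- identity theorem
    have hdd_an : AnalyticOnNhd ℂ dd Sop := hd_diff'.analyticOnNhd hSop_open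
    have hconv : Convex ℝ Sop := (convex_Ioo (0 : ℝ) (1 / 2)).linear_preimage Complex.imLm
    have hpre : IsPreconnected Sop := hconv.isPreconnected
    have hz₀ : (Complex.I / 4) ∈ Sop := by
      rw [hSop_eq]
      constructor <;> rw [hI4im] <;> norm_num
    have hfreq : ∃ᶠ z in nhdsWithin (Complex.I / 4) {(Complex.I / 4)}ᶜ, dd z = 0 := by
      have htend : Filter.Tendsto (fun n : ℕ => ((((n : ℝ) + 1)⁻¹ : ℝ) : ℂ) + Complex.I / 4)
          Filter.atTop (nhdsWithin (Complex.I / 4) {(Complex.I / 4)}ᶜ) := by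
        rw [tendsto_nhdsWithin_iff]
        constructor
        · have h1 : Filter.Tendsto (fun n : ℕ => ((n : ℝ) + 1)⁻¹) Filter.atTop (nhds 0) :=
            tendsto_one_div_add_atTop_nhds_zero_nat.congr (by intro n; rw [one_div])
          have h2 := (Complex.continuous_ofReal.tendsto 0).comp h1
          have h3 := h2.add_const (Complex.I / 4)
          simpa using h3
        · refine Filter.Eventually.of_forall fun n => ?_
          simp only [Set.mem_compl_iff, Set.mem_singleton_iff]
          intro hEq
          have hre := congrArg Complex.re hEq
          simp only [Complex.add_re, Complex.ofReal_re] at hre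
          have hpos : (0 : ℝ) < ((n : ℝ) + 1)⁻¹ := by positivity
          have : (Complex.I / 4).re = 0 := by simp
          rw [this] at hre
          linarith
      exact htend.frequently
        ((Filter.Eventually.of_forall fun n : ℕ => hmid (((n : ℝ) + 1)⁻¹)).frequently)
    have hzero : Set.EqOn dd 0 Sop :=
      hdd_an.eqOn_zero_of_preconnected_of_frequently_eq_zero hpre hz₀ hfreq
    have hI2mem : (Complex.I / 2) ∈ closure Sop := by
      rw [hclos]
      constructor <;> rw [hI2im] <;> norm_num
    have hSopS : Sop ⊆ {z : ℂ | 0 ≤ z.im ∧ z.im ≤ 1 / 2} := by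
      rw [← hclos]; exact subset_closure
    have hI2S : (Complex.I / 2) ∈ {z : ℂ | 0 ≤ z.im ∧ z.im ≤ 1 / 2} := by
      rw [← hclos]; exact hI2mem
    haveI hne : (nhdsWithin (Complex.I / 2) Sop).NeBot :=
      mem_closure_iff_nhdsWithin_neBot.mp hI2mem
    have hcw : Filter.Tendsto dd (nhdsWithin (Complex.I / 2) Sop) (nhds (dd (Complex.I / 2))) :=
      ((hd_cont _ hI2S).mono hSopS).tendsto
    have htend0 : Filter.Tendsto dd (nhdsWithin (Complex.I / 2) Sop) (nhds 0) :=
      Filter.Tendsto.congr' (eventually_mem_nhdsWithin.mono fun x hx => (hzero hx).symm)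
        tendsto_const_nhds
    have hI2 : dd (Complex.I / 2) = 0 := tendsto_nhds_unique hcw htend0
    have hfg : f (Complex.I / 2) = g 0 := by
      have h : f (Complex.I / 2) - g (-(Complex.I / 2) + Complex.I / 2) = 0 := hI2
      rw [sub_eq_zero] at h
      rw [h, neg_add_cancel]
    rw [← hf_top, hfg, hg_bot]
  -- conclude
  refine ext2 (fun v => Fop (T (Fop v))) (fun v => JJ (T (JJ v))) ?_ ?_ ?_ ?_ ?_
  · exact Fop.continuous.comp (T.continuous.comp Fop.continuous)
  · exact hJJ_cont.comp (T.continuous.comp hJJ_cont)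
  · intro u v; simp [map_add]
  · intro u v
    show JJ (T (JJ (u + v))) = JJ (T (JJ u)) + JJ (T (JJ v))
    rw [hJJ_add, map_add, hJJ_add]
  · intro c d
    refine ext_inner_left ℂ ?_
    intro w
    refine ext2c (fun w => inner ℂ w (Fop (T (Fop (τ c d)))))
      (fun w => inner ℂ w (JJ (T (JJ (τ c d))))) ?_ ?_ ?_ ?_ ?_ w
    · exact continuous_id.inner continuous_const
    · exact continuous_id.inner continuous_const
    · intro u v; simp [inner_add_left]
    · intro u v; simp [inner_add_left]
    · intro x y
      show (inner ℂ (τ x y) (Fop (T (Fop (τ c d)))) : ℂ) = inner ℂ (τ x y) (JJ (T (JJ (τ c d))))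
      calc (inner ℂ (τ x y) (Fop (T (Fop (τ c d)))) : ℂ)
          = inner ℂ (Fop (τ x y)) (T (Fop (τ c d))) := (hflip _ _).symm
        _ = inner ℂ (τ y x) (T (τ d c)) := by rw [hF, hF]
        _ = inner ℂ (τ (M.J c) (M.J d)) (T (τ (M.J x) (M.J y))) := core x y c d
        _ = inner ℂ (T (τ (M.J c) (M.J d))) (τ (M.J x) (M.J y)) := (hTadj _ _).symm
        _ = inner ℂ (T (JJ (τ c d))) (JJ (τ x y)) := by rw [hJJ_tensor, hJJ_tensor]
        _ = inner ℂ (τ x y) (JJ (T (JJ (τ c d)))) := (hJJsym _ _).symm
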